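/- Let F be a field of characteristic zero and n ≥ 4. For each 1 ≤ k ≤ n−3, the rational function χ_k = ξ_k / x_1^{k+1} is annihilated by the Euler derivation F_T = Σ_{j=1}^{n−1} x_j ∂/∂x_j of the field of rational functions F(x_1, …, x_{n−1}); equivalently, as a smooth function on the open set {x ∈ ℝ^{n−1} : x_1 ≠ 0} (when F = ℝ) it satisfies Σ_{j=1}^{n−1} x_j · ∂χ_k/∂x_j = 0. (These are the n−3 generalized Casimir invariants of the solvable Lie algebra s_{n+1,4}.) -/

import Mathlib

open MvPolynomial in
/-- The polynomial invariants `ξ_k` of the coadjoint representation of `n_{n,1}`: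
`ξ_0 = x 1` and, for `k ≥ 1`,
`ξ_k = ((-1)^k k/(k+1)!) x_2^{k+1} + Σ_{j=0}^{k-1} ((-1)^j/j!) x_2^j x_{k+2-j} x_1^{k-j}`. -/
noncomputable def xi (F : Type*) [Field F] : ℕ → MvPolynomial ℕ F
  | 0 => X 1
  | k + 1 =>
      C ((-1 : F) ^ (k + 1) * ((k + 1 : ℕ) : F) / (((k + 2).factorial : ℕ) : F)) *
          X 2 ^ (k + 2) +
        ∑ j ∈ Finset.range (k + 1),
          C ((-1 : F) ^ j / ((j.factorial : ℕ) : F)) * X 2 ^ j *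
            X (k + 3 - j) * X 1 ^ (k + 1 - j)

/-- The `1`-based coordinates of a point `x ∈ ℝ^{n-1}`: `coords n x i = x_i` for
`1 ≤ i ≤ n-1` and `0` otherwise. -/
noncomputable def coords (n : ℕ) (x : Fin (n - 1) → ℝ) : ℕ → ℝ :=
  fun i => if h : 1 ≤ i ∧ i ≤ n - 1 then x ⟨i - 1, by omega⟩ else 0

/-- The `j`-th coordinate unit vector of `ℝ^{n-1}` (`1`-based). -/
noncomputable def unitv (n : ℕ) (j : ℕ) : Fin (n - 1) → ℝ :=
  fun i => if i.val + 1 = j then 1 else 0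

/-- The generalized Casimir invariants of the solvable Lie algebra `s_{n+1,4}`:
`χ_k = ξ_k / x_1^{k+1}`. -/
noncomputable def chiS4 (n : ℕ) (k : ℕ) (x : Fin (n - 1) → ℝ) : ℝ :=
  MvPolynomial.eval (coords n x) (xi ℝ k) / (coords n x 1) ^ (k + 1)

lemma coords_smul (n : ℕ) (t : ℝ) (x : Fin (n - 1) → ℝ) (i : ℕ) :
    coords n (t • x) i = t * coords n x i := by
  unfold coords
  split <;> simp

lemma coords_diff (n : ℕ) (i : ℕ) :
    Differentiable ℝ (fun x : Fin (n - 1) → ℝ => coords n x i) := by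
  unfold coords
  by_cases h : 1 ≤ i ∧ i ≤ n - 1
  · simp only [dif_pos h]
    exact differentiable_pi.mp differentiable_id _
  · simp only [dif_neg h]
    exact differentiable_const 0

lemma eval_diff (n : ℕ) (p : MvPolynomial ℕ ℝ) :
    Differentiable ℝ (fun x : Fin (n - 1) → ℝ => MvPolynomial.eval (coords n x) p) := by
  induction p using MvPolynomial.induction_on with
  | C a => simpa using differentiable_const a
  | add p q hp hq => simp only [map_add]; exact hp.add hq
  | mul_X p i hp => simp only [map_mul, MvPolynomial.eval_X]; exact hp.mul (coords_diff n i)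

lemma xi_homog (m : ℕ) (t : ℝ) (σ : ℕ → ℝ) :
    MvPolynomial.eval (fun i => t * σ i) (xi ℝ (m + 1))
      = t ^ (m + 2) * MvPolynomial.eval σ (xi ℝ (m + 1)) := by
  simp only [xi, map_add, map_mul, map_sum, map_pow, MvPolynomial.eval_C,
    MvPolynomial.eval_X, mul_pow, Finset.mul_sum, mul_add]
  congr 1
  · ring
  · apply Finset.sum_congr rfl
    intro j hj
    have hjm : j ≤ m := Nat.lt_succ_iff.mp (Finset.mem_range.mp hj)
    rw [show m + 2 = j + 1 + (m + 1 - j) by omega, pow_add, pow_add, pow_one]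
    ring

lemma chi_smul (n k : ℕ) (hk : 1 ≤ k) (t : ℝ) (ht : t ≠ 0) (x : Fin (n - 1) → ℝ) :
    chiS4 n k (t • x) = chiS4 n k x := by
  obtain ⟨m, rfl⟩ : ∃ m, k = m + 1 := ⟨k - 1, by omega⟩
  unfold chiS4
  have h1 : (coords n (t • x)) = fun i => t * coords n x i := funext (coords_smul n t x)
  rw [h1, xi_homog]
  show t ^ (m + 2) * _ / (t * coords n x 1) ^ (m + 1 + 1) = _
  rw [mul_pow]
  exact mul_div_mul_left _ _ (pow_ne_zero _ ht)

/-- For `n ≥ 4` and `1 ≤ k ≤ n-3` the function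
`χ_k = ξ_k / x_1^{k+1}` is annihilated by the Euler operator:
`Σ_{j=1}^{n-1} x_j ∂χ_k/∂x_j = 0` on the open set `{x : x_1 ≠ 0}`:
these are the generalized Casimir invariants of `s_{n+1,4}`. -/
theorem chiS4_invariant (n : ℕ) (hn : 4 ≤ n)
    (k : ℕ) (hk1 : 1 ≤ k) (hk2 : k ≤ n - 3)
    (x : Fin (n - 1) → ℝ) (hx : coords n x 1 ≠ 0) :
    DifferentiableAt ℝ (chiS4 n k) x ∧
    ∑ j ∈ Finset.Icc 1 (n - 1),
      coords n x j * fderiv ℝ (chiS4 n k) x (unitv n j) = 0 := by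
  have hdiff : DifferentiableAt ℝ (chiS4 n k) x := by
    have h1 : DifferentiableAt ℝ
        (fun y : Fin (n - 1) → ℝ => MvPolynomial.eval (coords n y) (xi ℝ k)) x :=
      (eval_diff n (xi ℝ k)) x
    have h2 : DifferentiableAt ℝ (fun y : Fin (n - 1) → ℝ => coords n y 1 ^ (k + 1)) x :=
      ((coords_diff n 1).pow (k + 1)) x
    unfold chiS4
    simp only [div_eq_mul_inv]
    exact h1.mul (h2.inv (pow_ne_zero _ hx))
  refine ⟨hdiff, ?_⟩
  set L := fderiv ℝ (chiS4 n k) x with hL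
  have hx_eq : ∑ j ∈ Finset.Icc 1 (n - 1), coords n x j • unitv n j = x := by
    funext i
    have hmem : i.val + 1 ∈ Finset.Icc 1 (n - 1) := by
      rw [Finset.mem_Icc]
      exact ⟨by omega, by have := i.isLt; omega⟩
    simp only [Finset.sum_apply, Pi.smul_apply, unitv, smul_eq_mul, mul_ite, mul_one,
      mul_zero]
    rw [Finset.sum_ite_eq (Finset.Icc 1 (n - 1)) (i.val + 1) (coords n x), if_pos hmem]
    have hcond : 1 ≤ i.val + 1 ∧ i.val + 1 ≤ n - 1 := Finset.mem_Icc.mp hmem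
    rw [coords, dif_pos hcond]
    congr 1
  have hL' : ∑ j ∈ Finset.Icc 1 (n - 1), coords n x j * L (unitv n j) = L x := by
    conv_rhs => rw [← hx_eq]
    rw [map_sum]
    simp only [map_smul, smul_eq_mul]
  rw [hL']
  -- derivative along the scaling curve
  have hc : HasDerivAt (fun t : ℝ => t • x) x (1 : ℝ) := by
    simpa using (hasDerivAt_id (1 : ℝ)).smul_const x
  have hf : HasFDerivAt (chiS4 n k) L ((1 : ℝ) • x) := by
    rw [one_smul]; exact hdiff.hasFDerivAt
  have hg : HasDerivAt (fun t : ℝ => chiS4 n k (t • x)) (L x) 1 := by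
    exact hf.comp_hasDerivAt 1 hc
  have hg0 : HasDerivAt (fun t : ℝ => chiS4 n k (t • x)) 0 1 := by
    have heq : (fun t : ℝ => chiS4 n k (t • x)) =ᶠ[nhds 1] fun _ => chiS4 n k x := by
      filter_upwards [isOpen_ne.mem_nhds (one_ne_zero (α := ℝ))] with t ht
      exact chi_smul n k hk1 t ht x
    exact (hasDerivAt_const 1 _).congr_of_eventuallyEq heq
  exact hg.unique hg0
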